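/- There exists a 16×16 matrix W over the Gaussian integers ℤ[i] with every entry in {0, 1, −1, i, −i} such that W·W* = 6·I, where W* is the conjugate transpose, and the support matrix A of W (the (0,1)-matrix with A_{ij} = 1 iff W_{ij} ≠ 0) is the adjacency matrix of a strongly regular graph SRG(16,6,2,2); that is, a strongly regular graph with parameters (16,6,2,2) admits a quasi-balanced signing over the fourth roots of unity. -/

import Mathlib

open Matrix GaussianInt

/-- The all-ones matrix. -/
def allOnes (ι : Type*) : Matrix ι ι ℤ := Matrix.of fun _ _ => 1

/-- `A` is the adjacency matrix of a strongly regular graph with parameters `(v, k, l, mu)`. -/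
def IsSRGAdj {ι : Type*} [Fintype ι] [DecidableEq ι]
    (A : Matrix ι ι ℤ) (k l mu : ℤ) : Prop :=
  A.IsSymm ∧ (∀ i, A i i = 0) ∧ (∀ i j, A i j = 0 ∨ A i j = 1) ∧
    A * A = k • (1 : Matrix ι ι ℤ) + l • A + mu • (allOnes ι - 1 - A)

def wG : Matrix (Fin 16) (Fin 16) GaussianInt :=
  !![(⟨0, 0⟩ : GaussianInt),
    (⟨1, 0⟩ : GaussianInt),
    (⟨1, 0⟩ : GaussianInt),
    (⟨1, 0⟩ : GaussianInt),
    (⟨1, 0⟩ : GaussianInt),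
    (⟨0, 0⟩ : GaussianInt),
    (⟨0, 0⟩ : GaussianInt),
    (⟨0, 0⟩ : GaussianInt),
    (⟨1, 0⟩ : GaussianInt),
    (⟨0, 0⟩ : GaussianInt),
    (⟨0, 0⟩ : GaussianInt),
    (⟨0, 0⟩ : GaussianInt),
    (⟨1, 0⟩ : GaussianInt),
    (⟨0, 0⟩ : GaussianInt),
    (⟨0, 0⟩ : GaussianInt),
    (⟨0, 0⟩ : GaussianInt);
    (⟨-1, 0⟩ : GaussianInt),
    (⟨0, 0⟩ : GaussianInt),
    (⟨1, 0⟩ : GaussianInt),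
    (⟨-1, 0⟩ : GaussianInt),
    (⟨0, 0⟩ : GaussianInt),
    (⟨1, 0⟩ : GaussianInt),
    (⟨0, 0⟩ : GaussianInt),
    (⟨0, 0⟩ : GaussianInt),
    (⟨0, 0⟩ : GaussianInt),
    (⟨1, 0⟩ : GaussianInt),
    (⟨0, 0⟩ : GaussianInt),
    (⟨0, 0⟩ : GaussianInt),
    (⟨0, 0⟩ : GaussianInt),
    (⟨1, 0⟩ : GaussianInt),
    (⟨0, 0⟩ : GaussianInt),
    (⟨0, 0⟩ : GaussianInt);
    (⟨-1, 0⟩ : GaussianInt),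
    (⟨-1, 0⟩ : GaussianInt),
    (⟨0, 0⟩ : GaussianInt),
    (⟨1, 0⟩ : GaussianInt),
    (⟨0, 0⟩ : GaussianInt),
    (⟨0, 0⟩ : GaussianInt),
    (⟨1, 0⟩ : GaussianInt),
    (⟨0, 0⟩ : GaussianInt),
    (⟨0, 0⟩ : GaussianInt),
    (⟨0, 0⟩ : GaussianInt),
    (⟨1, 0⟩ : GaussianInt),
    (⟨0, 0⟩ : GaussianInt),
    (⟨0, 0⟩ : GaussianInt),
    (⟨0, 0⟩ : GaussianInt),
    (⟨1, 0⟩ : GaussianInt),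
    (⟨0, 0⟩ : GaussianInt);
    (⟨-1, 0⟩ : GaussianInt),
    (⟨1, 0⟩ : GaussianInt),
    (⟨-1, 0⟩ : GaussianInt),
    (⟨0, 0⟩ : GaussianInt),
    (⟨0, 0⟩ : GaussianInt),
    (⟨0, 0⟩ : GaussianInt),
    (⟨0, 0⟩ : GaussianInt),
    (⟨1, 0⟩ : GaussianInt),
    (⟨0, 0⟩ : GaussianInt),
    (⟨0, 0⟩ : GaussianInt),
    (⟨0, 0⟩ : GaussianInt),
    (⟨1, 0⟩ : GaussianInt),
    (⟨0, 0⟩ : GaussianInt),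
    (⟨0, 0⟩ : GaussianInt),
    (⟨0, 0⟩ : GaussianInt),
    (⟨1, 0⟩ : GaussianInt);
    (⟨1, 0⟩ : GaussianInt),
    (⟨0, 0⟩ : GaussianInt),
    (⟨0, 0⟩ : GaussianInt),
    (⟨0, 0⟩ : GaussianInt),
    (⟨0, 0⟩ : GaussianInt),
    (⟨1, 0⟩ : GaussianInt),
    (⟨1, 0⟩ : GaussianInt),
    (⟨1, 0⟩ : GaussianInt),
    (⟨0, 1⟩ : GaussianInt),
    (⟨0, 0⟩ : GaussianInt),
    (⟨0, 0⟩ : GaussianInt),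
    (⟨0, 0⟩ : GaussianInt),
    (⟨0, -1⟩ : GaussianInt),
    (⟨0, 0⟩ : GaussianInt),
    (⟨0, 0⟩ : GaussianInt),
    (⟨0, 0⟩ : GaussianInt);
    (⟨0, 0⟩ : GaussianInt),
    (⟨1, 0⟩ : GaussianInt),
    (⟨0, 0⟩ : GaussianInt),
    (⟨0, 0⟩ : GaussianInt),
    (⟨-1, 0⟩ : GaussianInt),
    (⟨0, 0⟩ : GaussianInt),
    (⟨1, 0⟩ : GaussianInt),
    (⟨-1, 0⟩ : GaussianInt),
    (⟨0, 0⟩ : GaussianInt),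
    (⟨0, 1⟩ : GaussianInt),
    (⟨0, 0⟩ : GaussianInt),
    (⟨0, 0⟩ : GaussianInt),
    (⟨0, 0⟩ : GaussianInt),
    (⟨0, -1⟩ : GaussianInt),
    (⟨0, 0⟩ : GaussianInt),
    (⟨0, 0⟩ : GaussianInt);
    (⟨0, 0⟩ : GaussianInt),
    (⟨0, 0⟩ : GaussianInt),
    (⟨1, 0⟩ : GaussianInt),
    (⟨0, 0⟩ : GaussianInt),
    (⟨-1, 0⟩ : GaussianInt),
    (⟨-1, 0⟩ : GaussianInt),
    (⟨0, 0⟩ : GaussianInt),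
    (⟨1, 0⟩ : GaussianInt),
    (⟨0, 0⟩ : GaussianInt),
    (⟨0, 0⟩ : GaussianInt),
    (⟨0, 1⟩ : GaussianInt),
    (⟨0, 0⟩ : GaussianInt),
    (⟨0, 0⟩ : GaussianInt),
    (⟨0, 0⟩ : GaussianInt),
    (⟨0, -1⟩ : GaussianInt),
    (⟨0, 0⟩ : GaussianInt);
    (⟨0, 0⟩ : GaussianInt),
    (⟨0, 0⟩ : GaussianInt),
    (⟨0, 0⟩ : GaussianInt),
    (⟨1, 0⟩ : GaussianInt),
    (⟨-1, 0⟩ : GaussianInt),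
    (⟨1, 0⟩ : GaussianInt),
    (⟨-1, 0⟩ : GaussianInt),
    (⟨0, 0⟩ : GaussianInt),
    (⟨0, 0⟩ : GaussianInt),
    (⟨0, 0⟩ : GaussianInt),
    (⟨0, 0⟩ : GaussianInt),
    (⟨0, 1⟩ : GaussianInt),
    (⟨0, 0⟩ : GaussianInt),
    (⟨0, 0⟩ : GaussianInt),
    (⟨0, 0⟩ : GaussianInt),
    (⟨0, -1⟩ : GaussianInt);
    (⟨1, 0⟩ : GaussianInt),
    (⟨0, 0⟩ : GaussianInt),
    (⟨0, 0⟩ : GaussianInt),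
    (⟨0, 0⟩ : GaussianInt),
    (⟨0, -1⟩ : GaussianInt),
    (⟨0, 0⟩ : GaussianInt),
    (⟨0, 0⟩ : GaussianInt),
    (⟨0, 0⟩ : GaussianInt),
    (⟨0, 0⟩ : GaussianInt),
    (⟨1, 0⟩ : GaussianInt),
    (⟨1, 0⟩ : GaussianInt),
    (⟨1, 0⟩ : GaussianInt),
    (⟨0, 1⟩ : GaussianInt),
    (⟨0, 0⟩ : GaussianInt),
    (⟨0, 0⟩ : GaussianInt),
    (⟨0, 0⟩ : GaussianInt);
    (⟨0, 0⟩ : GaussianInt),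
    (⟨1, 0⟩ : GaussianInt),
    (⟨0, 0⟩ : GaussianInt),
    (⟨0, 0⟩ : GaussianInt),
    (⟨0, 0⟩ : GaussianInt),
    (⟨0, -1⟩ : GaussianInt),
    (⟨0, 0⟩ : GaussianInt),
    (⟨0, 0⟩ : GaussianInt),
    (⟨-1, 0⟩ : GaussianInt),
    (⟨0, 0⟩ : GaussianInt),
    (⟨1, 0⟩ : GaussianInt),
    (⟨-1, 0⟩ : GaussianInt),
    (⟨0, 0⟩ : GaussianInt),
    (⟨0, 1⟩ : GaussianInt),
    (⟨0, 0⟩ : GaussianInt),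
    (⟨0, 0⟩ : GaussianInt);
    (⟨0, 0⟩ : GaussianInt),
    (⟨0, 0⟩ : GaussianInt),
    (⟨1, 0⟩ : GaussianInt),
    (⟨0, 0⟩ : GaussianInt),
    (⟨0, 0⟩ : GaussianInt),
    (⟨0, 0⟩ : GaussianInt),
    (⟨0, -1⟩ : GaussianInt),
    (⟨0, 0⟩ : GaussianInt),
    (⟨-1, 0⟩ : GaussianInt),
    (⟨-1, 0⟩ : GaussianInt),
    (⟨0, 0⟩ : GaussianInt),
    (⟨1, 0⟩ : GaussianInt),
    (⟨0, 0⟩ : GaussianInt),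
    (⟨0, 0⟩ : GaussianInt),
    (⟨0, 1⟩ : GaussianInt),
    (⟨0, 0⟩ : GaussianInt);
    (⟨0, 0⟩ : GaussianInt),
    (⟨0, 0⟩ : GaussianInt),
    (⟨0, 0⟩ : GaussianInt),
    (⟨1, 0⟩ : GaussianInt),
    (⟨0, 0⟩ : GaussianInt),
    (⟨0, 0⟩ : GaussianInt),
    (⟨0, 0⟩ : GaussianInt),
    (⟨0, -1⟩ : GaussianInt),
    (⟨-1, 0⟩ : GaussianInt),
    (⟨1, 0⟩ : GaussianInt),
    (⟨-1, 0⟩ : GaussianInt),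
    (⟨0, 0⟩ : GaussianInt),
    (⟨0, 0⟩ : GaussianInt),
    (⟨0, 0⟩ : GaussianInt),
    (⟨0, 0⟩ : GaussianInt),
    (⟨0, 1⟩ : GaussianInt);
    (⟨1, 0⟩ : GaussianInt),
    (⟨0, 0⟩ : GaussianInt),
    (⟨0, 0⟩ : GaussianInt),
    (⟨0, 0⟩ : GaussianInt),
    (⟨0, 1⟩ : GaussianInt),
    (⟨0, 0⟩ : GaussianInt),
    (⟨0, 0⟩ : GaussianInt),
    (⟨0, 0⟩ : GaussianInt),
    (⟨0, -1⟩ : GaussianInt),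
    (⟨0, 0⟩ : GaussianInt),
    (⟨0, 0⟩ : GaussianInt),
    (⟨0, 0⟩ : GaussianInt),
    (⟨0, 0⟩ : GaussianInt),
    (⟨1, 0⟩ : GaussianInt),
    (⟨1, 0⟩ : GaussianInt),
    (⟨1, 0⟩ : GaussianInt);
    (⟨0, 0⟩ : GaussianInt),
    (⟨1, 0⟩ : GaussianInt),
    (⟨0, 0⟩ : GaussianInt),
    (⟨0, 0⟩ : GaussianInt),
    (⟨0, 0⟩ : GaussianInt),
    (⟨0, 1⟩ : GaussianInt),
    (⟨0, 0⟩ : GaussianInt),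
    (⟨0, 0⟩ : GaussianInt),
    (⟨0, 0⟩ : GaussianInt),
    (⟨0, -1⟩ : GaussianInt),
    (⟨0, 0⟩ : GaussianInt),
    (⟨0, 0⟩ : GaussianInt),
    (⟨-1, 0⟩ : GaussianInt),
    (⟨0, 0⟩ : GaussianInt),
    (⟨1, 0⟩ : GaussianInt),
    (⟨-1, 0⟩ : GaussianInt);
    (⟨0, 0⟩ : GaussianInt),
    (⟨0, 0⟩ : GaussianInt),
    (⟨1, 0⟩ : GaussianInt),
    (⟨0, 0⟩ : GaussianInt),
    (⟨0, 0⟩ : GaussianInt),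
    (⟨0, 0⟩ : GaussianInt),
    (⟨0, 1⟩ : GaussianInt),
    (⟨0, 0⟩ : GaussianInt),
    (⟨0, 0⟩ : GaussianInt),
    (⟨0, 0⟩ : GaussianInt),
    (⟨0, -1⟩ : GaussianInt),
    (⟨0, 0⟩ : GaussianInt),
    (⟨-1, 0⟩ : GaussianInt),
    (⟨-1, 0⟩ : GaussianInt),
    (⟨0, 0⟩ : GaussianInt),
    (⟨1, 0⟩ : GaussianInt);
    (⟨0, 0⟩ : GaussianInt),
    (⟨0, 0⟩ : GaussianInt),
    (⟨0, 0⟩ : GaussianInt),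
    (⟨1, 0⟩ : GaussianInt),
    (⟨0, 0⟩ : GaussianInt),
    (⟨0, 0⟩ : GaussianInt),
    (⟨0, 0⟩ : GaussianInt),
    (⟨0, 1⟩ : GaussianInt),
    (⟨0, 0⟩ : GaussianInt),
    (⟨0, 0⟩ : GaussianInt),
    (⟨0, 0⟩ : GaussianInt),
    (⟨0, -1⟩ : GaussianInt),
    (⟨-1, 0⟩ : GaussianInt),
    (⟨1, 0⟩ : GaussianInt),
    (⟨-1, 0⟩ : GaussianInt),
    (⟨0, 0⟩ : GaussianInt)]

def aZ : Matrix (Fin 16) (Fin 16) ℤ :=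
  Matrix.of fun i j => if wG i j = 0 then 0 else 1

lemma wG_entries : ∀ i j, wG i j = 0 ∨ wG i j = 1 ∨ wG i j = -1 ∨
    wG i j = (⟨0, 1⟩ : GaussianInt) ∨ wG i j = (⟨0, -1⟩ : GaussianInt) := by intro i; fin_cases i <;> decide

lemma wG_mul : wG * wGᴴ = (6 : GaussianInt) • 1 := by decide

lemma aZ_supp : ∀ i j, (wG i j = 0 → aZ i j = 0) ∧ (wG i j ≠ 0 → aZ i j = 1) := by intro i; fin_cases i <;> decide

lemma aZ_symm : aZ.IsSymm := by decide

lemma aZ_diag : ∀ i, aZ i i = 0 := by decide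

lemma aZ_01 : ∀ i j, aZ i j = 0 ∨ aZ i j = 1 := by intro i; fin_cases i <;> decide

lemma aZ_eq : aZ * aZ = (6 : ℤ) • (1 : Matrix (Fin 16) (Fin 16) ℤ) + (2 : ℤ) • aZ +
    (2 : ℤ) • (allOnes (Fin 16) - 1 - aZ) := by decide

theorem stmt19 :
    ∃ W : Matrix (Fin 16) (Fin 16) ℂ,
      ∃ A : Matrix (Fin 16) (Fin 16) ℤ,
      (∀ i j, W i j = 0 ∨ W i j = 1 ∨ W i j = -1 ∨
        W i j = Complex.I ∨ W i j = -Complex.I) ∧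
      W * Wᴴ = (6 : ℂ) • 1 ∧
      (∀ i j, (W i j = 0 → A i j = 0) ∧ (W i j ≠ 0 → A i j = 1)) ∧
      IsSRGAdj A 6 2 2 := by
  refine ⟨wG.map toComplex, aZ, ?_, ?_, ?_, aZ_symm, aZ_diag, aZ_01, aZ_eq⟩
  · intro i j
    rcases wG_entries i j with h | h | h | h | h <;>
      simp [Matrix.map_apply, h, toComplex_def'] <;> ring
  · have hct : (wGᴴ).map toComplex = (wG.map toComplex)ᴴ :=
      Matrix.conjTranspose_map toComplex (fun x => toComplex_star x)
    calc wG.map toComplex * (wG.map toComplex)ᴴ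
        = (wG * wGᴴ).map toComplex := by rw [Matrix.map_mul, hct]
      _ = ((6 : GaussianInt) • (1 : Matrix (Fin 16) (Fin 16) GaussianInt)).map toComplex := by
          rw [wG_mul]
      _ = (6 : ℂ) • 1 := by
          ext i j
          by_cases h : i = j <;>
            simp [Matrix.map_apply, Matrix.one_apply, h, map_ofNat]
  · intro i j
    constructor
    · intro h
      exact (aZ_supp i j).1 (toComplex_eq_zero.mp h)
    · intro h
      exact (aZ_supp i j).2 (fun h0 => h (by simp [Matrix.map_apply, h0]))
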